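/- arXiv:0812.1157 — 8 statements merged into one kernel-verified Lean document; each statement's English description precedes it below -/
import Mathlib

section
/- Fix a natural number n. Identify the vertices of the unit cube [0,1]ⁿ with the functions Fin n → ({0,1} ⊆ [0,1]), and order [0,1]ⁿ by the pointwise order. Say a path β : [0,1] → [0,1]ⁿ is 'directed' if it is continuous and each coordinate function t ↦ (β t) i is nondecreasing, and say β is 'skeletal' if for every t, at most one coordinate of β t lies in the open interval (0,1). Then for all vertices ε, ε' of the cube, ε ≤ ε' pointwise if and only if there exists a skeletal directed path β with β 0 = ε and β 1 = ε'. -/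
/-- The order between vertices of the directed unit `n`-cube is realized by
directed paths in the 1-skeleton: two vertices satisfy `ε ≤ ε'` pointwise iff
they are joined by a continuous, coordinatewise nondecreasing path in the
cube having at most one coordinate in the open interval `(0,1)` at any time. -/
theorem cube_vertex_order_iff_skeletal_dipath (n : ℕ) (ε ε' : Fin n → ℝ)
    (hε : ∀ i, ε i = 0 ∨ ε i = 1) (hε' : ∀ i, ε' i = 0 ∨ ε' i = 1) :
    ε ≤ ε' ↔
      ∃ β : Set.Icc (0:ℝ) 1 → (Fin n → ℝ),
        (∀ t i, β t i ∈ Set.Icc (0:ℝ) 1) ∧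
        Continuous β ∧
        (∀ i, Monotone fun t => β t i) ∧
        (∀ t, ∀ i j : Fin n,
          β t i ∈ Set.Ioo (0:ℝ) 1 → β t j ∈ Set.Ioo (0:ℝ) 1 → i = j) ∧
        β 0 = ε ∧ β 1 = ε' := by
  constructor
  · intro hle
    set c : ℝ → ℝ := fun u => max 0 (min u 1) with hcdef
    have hc0 : ∀ u, 0 ≤ c u := fun u => le_max_left _ _
    have hc1 : ∀ u, c u ≤ 1 := fun u => max_le zero_le_one (min_le_right _ _)
    have hcmono : Monotone c := fun a b hab =>
      max_le_max le_rfl (min_le_min hab le_rfl)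
    refine ⟨fun t i => ε i + (ε' i - ε i) * c ((n : ℝ) * t.1 - i), ?_, ?_, ?_, ?_, ?_, ?_⟩
    · intro t i
      dsimp only
      have hd : 0 ≤ ε' i - ε i := sub_nonneg.2 (hle i)
      have h0 := hc0 ((n : ℝ) * t.1 - i)
      have h1 := hc1 ((n : ℝ) * t.1 - i)
      rcases hε i with h | h <;> rcases hε' i with h' | h' <;>
        constructor <;> nlinarith
    · refine continuous_pi fun i => ?_
      apply Continuous.add continuous_const
      apply Continuous.mul continuous_const
      exact continuous_const.max
        (((continuous_const.mul continuous_subtype_val).sub continuous_const).min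
          continuous_const)
    · intro i t s hts
      dsimp only
      have hd : 0 ≤ ε' i - ε i := sub_nonneg.2 (hle i)
      have hcc : c ((n : ℝ) * t.1 - i) ≤ c ((n : ℝ) * s.1 - i) := by
        apply hcmono
        have : (t : ℝ) ≤ s := hts
        nlinarith [Nat.cast_nonneg (α := ℝ) n]
      exact add_le_add le_rfl (mul_le_mul_of_nonneg_left hcc hd)
    · intro t i j hi hj
      have key : ∀ k : Fin n,
          ε k + (ε' k - ε k) * c ((n : ℝ) * t.1 - k) ∈ Set.Ioo (0:ℝ) 1 →
          (k : ℝ) < (n : ℝ) * t.1 ∧ (n : ℝ) * t.1 < k + 1 := by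
        intro k hk
        have hd : 0 ≤ ε' k - ε k := sub_nonneg.2 (hle k)
        have h0 := hc0 ((n : ℝ) * t.1 - k)
        have h1 := hc1 ((n : ℝ) * t.1 - k)
        obtain ⟨hk1, hk2⟩ := hk
        have he0 : ε k = 0 := by
          rcases hε k with h | h
          · exact h
          · exfalso; rw [h] at hk2; nlinarith
        have he1 : ε' k = 1 := by
          rcases hε' k with h | h
          · exfalso; rw [he0, h] at hk1; nlinarith
          · exact h
        rw [he0, he1] at hk1 hk2
        simp only [sub_zero, one_mul, zero_add] at hk1 hk2
        have hu1 : 0 < min ((n : ℝ) * t.1 - k) 1 := by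
          by_contra h
          push_neg at h
          have : c ((n : ℝ) * t.1 - k) = 0 := max_eq_left h
          rw [this] at hk1; exact lt_irrefl _ hk1
        have hu2 : (n : ℝ) * t.1 - k < 1 := by
          by_contra h
          push_neg at h
          have hm : min ((n : ℝ) * t.1 - k) 1 = 1 := min_eq_right h
          have : c ((n : ℝ) * t.1 - k) = 1 := by
            rw [hcdef]; simp [hm]
          rw [this] at hk2; exact lt_irrefl _ hk2
        have := lt_of_lt_of_le hu1 (min_le_left _ _)
        constructor <;> linarith
      obtain ⟨hi1, hi2⟩ := key i hi
      obtain ⟨hj1, hj2⟩ := key j hj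
      have h1 : (i : ℝ) < (j : ℝ) + 1 := hi1.trans hj2
      have h2 : (j : ℝ) < (i : ℝ) + 1 := hj1.trans hi2
      have h1' : (i : ℕ) < (j : ℕ) + 1 := by exact_mod_cast h1
      have h2' : (j : ℕ) < (i : ℕ) + 1 := by exact_mod_cast h2
      exact Fin.ext (by omega)
    · funext i
      show ε i + (ε' i - ε i) * c ((n : ℝ) * ((0 : Set.Icc (0:ℝ) 1) : ℝ) - i) = ε i
      have h0 : ((0 : Set.Icc (0:ℝ) 1) : ℝ) = 0 := rfl
      rw [h0, mul_zero, zero_sub]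
      have hcz : c (-(i : ℝ)) = 0 :=
        max_eq_left ((min_le_left _ _).trans (neg_nonpos.2 (Nat.cast_nonneg _)))
      rw [hcz, mul_zero, add_zero]
    · funext i
      show ε i + (ε' i - ε i) * c ((n : ℝ) * ((1 : Set.Icc (0:ℝ) 1) : ℝ) - i) = ε' i
      have h1 : ((1 : Set.Icc (0:ℝ) 1) : ℝ) = 1 := rfl
      rw [h1, mul_one]
      have hlt : (i : ℝ) + 1 ≤ (n : ℝ) := by exact_mod_cast Nat.succ_le_of_lt i.isLt
      have hm : min ((n : ℝ) - i) 1 = 1 := min_eq_right (by linarith)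
      have hco : c ((n : ℝ) - i) = 1 := by rw [hcdef]; simp [hm]
      rw [hco, mul_one]; ring
  · rintro ⟨β, -, -, hmono, -, h0, h1⟩
    intro i
    have := hmono i (a := 0) (b := 1) (by norm_num [← Subtype.coe_le_coe])
    simpa [h0, h1] using this
end

section
/- Fix a natural number n. Say a path α : [0,1] → [0,1]ⁿ is 'directed' if it is continuous and each coordinate function t ↦ (α t) i is nondecreasing, and 'skeletal' if for every t at most one coordinate of α t lies in the open interval (0,1). For x ∈ [0,1]ⁿ define the vertex v(x) ∈ [0,1]ⁿ by v(x) i = 1 if x i = 1 and v(x) i = 0 otherwise. Then for every directed path α on [0,1]ⁿ: (a) v(α 0) ≤ v(α 1) in the pointwise order; (b) there exists a skeletal directed path β with β 0 = v(α 0) and β 1 = v(α 1); and (c) there is a continuous homotopy H : [0,1] × [0,1] → [0,1]ⁿ with H(·,0) = α, H(·,1) = β, such that for every s ∈ [0,1] the path H(·,s) is directed (namely the straight-line homotopy H(t,s) = (1−s)·α t + s·β t, for a suitable such β). -/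
/-- Every directed path on the directed unit `n`-cube admits a skeletal
(cellular) directed approximation between the associated vertices, homotopic
to the original path through directed paths via the straight-line homotopy. -/
theorem cube_dipath_cellular_approximation (n : ℕ)
    (α : Set.Icc (0:ℝ) 1 → (Fin n → ℝ))
    (hcube : ∀ t i, α t i ∈ Set.Icc (0:ℝ) 1)
    (hcont : Continuous α)
    (hmono : ∀ i, Monotone fun t => α t i) :
    -- (a) the vertex of `α 0` is below the vertex of `α 1`
    ((fun i => if α 0 i = 1 then (1:ℝ) else 0) ≤
      fun i => if α 1 i = 1 then (1:ℝ) else 0) ∧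
    -- (b), (c): a skeletal directed path between the vertices, together with
    -- the straight-line homotopy through directed paths
    ∃ β : Set.Icc (0:ℝ) 1 → (Fin n → ℝ),
      (∀ t i, β t i ∈ Set.Icc (0:ℝ) 1) ∧
      Continuous β ∧
      (∀ i, Monotone fun t => β t i) ∧
      (∀ t, ∀ i j : Fin n,
        β t i ∈ Set.Ioo (0:ℝ) 1 → β t j ∈ Set.Ioo (0:ℝ) 1 → i = j) ∧
      (β 0 = fun i => if α 0 i = 1 then (1:ℝ) else 0) ∧
      (β 1 = fun i => if α 1 i = 1 then (1:ℝ) else 0) ∧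
      ∃ H : Set.Icc (0:ℝ) 1 × Set.Icc (0:ℝ) 1 → (Fin n → ℝ),
        Continuous H ∧
        (∀ t, H (t, 0) = α t) ∧
        (∀ t, H (t, 1) = β t) ∧
        (∀ s, ∀ i, Monotone fun t => H (t, s) i) ∧
        (∀ t s i, H (t, s) i = (1 - (s:ℝ)) * α t i + (s:ℝ) * β t i) := by
  have h01 : (0 : Set.Icc (0:ℝ) 1) ≤ 1 := by
    rw [← Subtype.coe_le_coe]; norm_num
  have hva : ∀ i, α 0 i = 1 → α 1 i = 1 := by
    intro i h
    have := hmono i h01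
    simp only at this
    have h2 := (hcube 1 i).2
    linarith [h ▸ this]
  refine ⟨?_, ?_⟩
  · intro i
    by_cases h : α 0 i = 1
    · simp [h, hva i h]
    · simp only [h, if_false]
      split_ifs <;> norm_num
  · set β : Set.Icc (0:ℝ) 1 → (Fin n → ℝ) := fun t i =>
      if α 0 i = 1 then 1
      else if α 1 i = 1 then max 0 (min 1 ((n:ℝ) * (t:ℝ) - (i:ℝ))) else 0 with hβ
    have hβmem : ∀ t i, β t i ∈ Set.Icc (0:ℝ) 1 := by
      intro t i
      simp only [hβ]
      split_ifs
      · exact ⟨zero_le_one, le_refl 1⟩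
      · exact ⟨le_max_left _ _, max_le zero_le_one (min_le_left _ _)⟩
      · exact ⟨le_refl 0, zero_le_one⟩
    have hβcont : Continuous β := by
      apply continuous_pi
      intro i
      simp only [hβ]
      split_ifs
      · exact continuous_const
      · exact continuous_const.max (continuous_const.min
          ((continuous_const.mul continuous_subtype_val).sub continuous_const))
      · exact continuous_const
    have hβmono : ∀ i, Monotone fun t => β t i := by
      intro i t₁ t₂ h
      simp only [hβ]
      split_ifs
      · exact le_refl 1
      · refine max_le_max le_rfl (min_le_min le_rfl ?_)
        have : (t₁:ℝ) ≤ (t₂:ℝ) := Subtype.coe_le_coe.mpr h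
        nlinarith [Nat.cast_nonneg (α := ℝ) n]
      · exact le_refl 0
    refine ⟨β, hβmem, hβcont, hβmono, ?_, ?_, ?_, ?_⟩
    · -- skeletal
      intro t i j hi hj
      have key : ∀ k : Fin n, β t k ∈ Set.Ioo (0:ℝ) 1 →
          (k:ℝ) < (n:ℝ) * (t:ℝ) ∧ (n:ℝ) * (t:ℝ) < (k:ℝ) + 1 := by
        intro k hk
        simp only [hβ] at hk
        split_ifs at hk with h1 h2
        · exact absurd hk.2 (lt_irrefl 1)
        · obtain ⟨hk0, hk1⟩ := hk
          have hmin : 0 < min 1 ((n:ℝ) * t - k) := (lt_max_iff.mp hk0).resolve_left (lt_irrefl 0)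
          have hlow : (0:ℝ) < (n:ℝ) * t - k := lt_of_lt_of_le hmin (min_le_right _ _)
          have hmax : max 0 (min 1 ((n:ℝ) * t - k)) < 1 := hk1
          have hm1 : min 1 ((n:ℝ) * t - k) < 1 := lt_of_le_of_lt (le_max_right 0 _) hmax
          have hhigh : (n:ℝ) * t - k < 1 := by
            by_contra hc
            push_neg at hc
            rw [min_eq_left hc] at hm1
            exact lt_irrefl 1 hm1
          constructor <;> linarith
        · exact absurd hk.1 (lt_irrefl 0)
      obtain ⟨hi1, hi2⟩ := key i hi
      obtain ⟨hj1, hj2⟩ := key j hj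
      have h1 : (i:ℝ) < (j:ℝ) + 1 := lt_trans hi1 hj2
      have h2 : (j:ℝ) < (i:ℝ) + 1 := lt_trans hj1 hi2
      have : (i:ℕ) = (j:ℕ) := by
        have a : (i:ℕ) < (j:ℕ) + 1 := by exact_mod_cast h1
        have b : (j:ℕ) < (i:ℕ) + 1 := by exact_mod_cast h2
        omega
      exact Fin.ext this
    · -- β 0
      funext i
      simp only [hβ]
      split_ifs with h1 h2
      · rfl
      · have : ((0 : Set.Icc (0:ℝ) 1) : ℝ) = 0 := rfl
        rw [this]
        have : (n:ℝ) * 0 - (i:ℝ) ≤ 0 := by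
          simp [Nat.cast_nonneg]
        rw [max_eq_left (le_trans (min_le_right _ _) this)]
      · rfl
    · -- β 1
      funext i
      simp only [hβ]
      split_ifs with h1 h2 h3
      · rfl
      · exact absurd (hva i h1) h2
      · have hc1 : ((1 : Set.Icc (0:ℝ) 1) : ℝ) = 1 := rfl
        rw [hc1, mul_one]
        have hin : (i:ℝ) + 1 ≤ (n:ℝ) := by exact_mod_cast i.isLt
        have h1n : (1:ℝ) ≤ (n:ℝ) - (i:ℝ) := by linarith
        rw [min_eq_left h1n, max_eq_right zero_le_one]
      · rfl
    · -- homotopy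
      refine ⟨fun p i => (1 - (p.2:ℝ)) * α p.1 i + (p.2:ℝ) * β p.1 i, ?_, ?_, ?_, ?_, ?_⟩
      · apply continuous_pi
        intro i
        have hα : Continuous fun p : Set.Icc (0:ℝ) 1 × Set.Icc (0:ℝ) 1 => α p.1 i :=
          (continuous_apply i).comp (hcont.comp continuous_fst)
        have hβ' : Continuous fun p : Set.Icc (0:ℝ) 1 × Set.Icc (0:ℝ) 1 => β p.1 i :=
          (continuous_apply i).comp (hβcont.comp continuous_fst)
        have hs : Continuous fun p : Set.Icc (0:ℝ) 1 × Set.Icc (0:ℝ) 1 => (p.2:ℝ) :=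
          continuous_subtype_val.comp continuous_snd
        exact ((continuous_const.sub hs).mul hα).add (hs.mul hβ')
      · intro t; funext i; norm_num
      · intro t; funext i; norm_num
      · intro s i t₁ t₂ h
        have hs0 : (0:ℝ) ≤ (s:ℝ) := s.2.1
        have hs1 : (s:ℝ) ≤ 1 := s.2.2
        have h1 := hmono i h
        have h2 := hβmono i h
        simp only at h1 h2 ⊢
        nlinarith
      · intro t s i; rfl
end

section
/- Fix an integer n > 0 and a continuous path α : [0,1] → [0,1]ⁿ each of whose coordinate functions t ↦ (α t) i is nondecreasing. For x ∈ [0,1]ⁿ define the vertex v(x) ∈ [0,1]ⁿ by v(x) i = 1 if x i = 1 and v(x) i = 0 otherwise. Suppose that α 0 has at least one coordinate equal to 0 or 1, that α 1 has at least one coordinate equal to 0 or 1, and that every coordinate of α(1/2) lies in the open interval (0,1). Then v(α 0) is the vertex (0,…,0) and v(α 1) ≠ (0,…,0); in particular v(α 0) ≠ v(α 1), so every path from v(α 0) to v(α 1) is non-constant. -/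
/-- If a directed path on the directed unit `n`-cube starts and ends on the
boundary but passes through the interior at time `1/2`, then its initial
vertex is `(0,…,0)`, its final vertex is not, and so they differ. -/
theorem cube_dipath_boundary_interior (n : ℕ) (hn : 0 < n)
    (α : Set.Icc (0:ℝ) 1 → (Fin n → ℝ))
    (hcube : ∀ t i, α t i ∈ Set.Icc (0:ℝ) 1)
    (hcont : Continuous α)
    (hmono : ∀ i, Monotone fun t => α t i)
    (h0 : ∃ i : Fin n, α 0 i = 0 ∨ α 0 i = 1)
    (h1 : ∃ i : Fin n, α 1 i = 0 ∨ α 1 i = 1)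
    (hmid : ∀ i : Fin n,
      α ⟨1/2, by norm_num⟩ i ∈ Set.Ioo (0:ℝ) 1) :
    (fun i : Fin n => if α 0 i = 1 then (1:ℝ) else 0) = (fun _ => (0:ℝ)) ∧
    (fun i : Fin n => if α 1 i = 1 then (1:ℝ) else 0) ≠ (fun _ => (0:ℝ)) ∧
    (fun i : Fin n => if α 0 i = 1 then (1:ℝ) else 0) ≠
      (fun i : Fin n => if α 1 i = 1 then (1:ℝ) else 0) := by
  have hle0 : (0 : Set.Icc (0:ℝ) 1) ≤ ⟨1/2, by norm_num⟩ := by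
    rw [← Subtype.coe_le_coe]; norm_num
  have hle1 : (⟨1/2, by norm_num⟩ : Set.Icc (0:ℝ) 1) ≤ 1 := by
    rw [← Subtype.coe_le_coe]; norm_num
  have hv0 : ∀ i : Fin n, α 0 i ≠ 1 := by
    intro i h
    have := hmono i hle0
    have := (hmid i).2
    simp only at *
    linarith [hmono i hle0]
  have key : ∃ i : Fin n, α 1 i = 1 := by
    obtain ⟨i, hi⟩ := h1
    rcases hi with hi | hi
    · exfalso
      have := hmono i hle1
      have h2 := (hmid i).1
      simp only at this
      rw [hi] at this
      linarith
    · exact ⟨i, hi⟩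
  obtain ⟨j, hj⟩ := key
  refine ⟨funext fun i => by simp [hv0 i], ?_, ?_⟩
  · intro h
    have := congrFun h j
    simp [hj] at this
  · intro h
    have := congrFun h j
    simp [hj, hv0 j] at this
end

section
/- Let S₁ and S₂ be types and let a, b, c, d : S₂ → S₁ be functions. Let ∂ : (S₂ →₀ ℤ) → (S₁ →₀ ℤ) be the ℤ-linear map determined on generators by sending the basis element of σ ∈ S₂ to (single (a σ) 1) + (single (b σ) 1) − (single (c σ) 1) − (single (d σ) 1), where single x 1 denotes the finitely supported function taking value 1 at x and 0 elsewhere. If z : S₁ →₀ ℤ lies in the range of ∂ and every coefficient of z is nonnegative, then z = 0. -/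
/-- If a boundary (an element of the range of the cubical differential
`∂ σ = a σ + b σ − c σ − d σ`) has all coefficients nonnegative, it is zero. -/
theorem boundary_nonneg_eq_zero {S₁ S₂ : Type*}
    (a b c d : S₂ → S₁)
    (D : (S₂ →₀ ℤ) →ₗ[ℤ] (S₁ →₀ ℤ))
    (hD : ∀ σ : S₂, D (Finsupp.single σ 1) =
      Finsupp.single (a σ) 1 + Finsupp.single (b σ) 1
        - Finsupp.single (c σ) 1 - Finsupp.single (d σ) 1)
    (z : S₁ →₀ ℤ) (hz : z ∈ Set.range D) (hpos : ∀ x : S₁, 0 ≤ z x) :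
    z = 0 := by
  -- the "total coefficient sum" linear map
  set T : (S₁ →₀ ℤ) →ₗ[ℤ] ℤ := Finsupp.linearCombination ℤ (fun _ : S₁ => (1 : ℤ)) with hT
  have hTz : T z = 0 := by
    obtain ⟨w, rfl⟩ := hz
    have hcomp : (T.comp D) = 0 := by
      apply Finsupp.lhom_ext'
      intro σ
      ext
      simp [hT, hD σ, Finsupp.linearCombination_single]
    have := LinearMap.congr_fun hcomp w
    simpa using this
  have hsum : z.sum (fun _ n => n) = 0 := by
    simpa [hT, Finsupp.linearCombination_apply, Finsupp.sum] using hTz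
  ext x
  by_contra hx
  have hxmem : x ∈ z.support := Finsupp.mem_support_iff.mpr (by simpa using hx)
  have hlt : 0 < ∑ y ∈ z.support, z y := by
    apply Finset.sum_pos'
    · intro y _; exact hpos y
    · exact ⟨x, hxmem, lt_of_le_of_ne (hpos x) (Ne.symm (by simpa using hx))⟩
  rw [Finsupp.sum] at hsum
  omega
end

section
/- Work in AddCircle ℝ 1 (the circle ℝ/ℤ) with projection p : ℝ → AddCircle ℝ 1. Call a loop γ : [0,1] → AddCircle ℝ 1 with γ 0 = γ 1 = 0 'directed' if there exists a continuous nondecreasing γ̃ : [0,1] → ℝ with γ̃ 0 = 0 and γ = p ∘ γ̃ (necessarily γ̃ 1 ∈ ℤ); define deg γ := γ̃ 1. Call two directed loops γ, γ' 'dihomotopic' if there is a continuous H : [0,1] × [0,1] → AddCircle ℝ 1 with H(·,0) = γ, H(·,1) = γ', H(0,s) = H(1,s) = 0 for all s, and H(·,s) a directed loop for every s. Then: deg is well defined (independent of the choice of lift), dihomotopy is an equivalence relation on directed loops, deg γ is a nonnegative integer for every directed loop γ, two directed loops are dihomotopic if and only if they have the same degree, and every natural number is the degree of some directed loop. Hence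 deg induces a bijection from the set of dihomotopy classes of directed loops onto ℕ. -/
/-- `g` is a continuous nondecreasing lift, starting at `0`, of the loop `γ`
on the circle `ℝ/ℤ` based at `0`. The degree of `γ` is `g 1`. -/
def IsDiLift (γ : Set.Icc (0:ℝ) 1 → AddCircle (1:ℝ))
    (g : Set.Icc (0:ℝ) 1 → ℝ) : Prop :=
  Continuous g ∧ Monotone g ∧ g 0 = 0 ∧
    (∀ t, γ t = ((g t : ℝ) : AddCircle (1:ℝ))) ∧ γ 1 = 0

/-- A directed loop on the circle `ℝ/ℤ`, based at `0`. -/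
def IsDirectedLoop (γ : Set.Icc (0:ℝ) 1 → AddCircle (1:ℝ)) : Prop :=
  ∃ g, IsDiLift γ g

/-- Two directed loops are dihomotopic if they are homotopic relative to
endpoints through directed loops. -/
def Dihomotopic (γ γ' : Set.Icc (0:ℝ) 1 → AddCircle (1:ℝ)) : Prop :=
  ∃ H : Set.Icc (0:ℝ) 1 × Set.Icc (0:ℝ) 1 → AddCircle (1:ℝ),
    Continuous H ∧
    (∀ t, H (t, 0) = γ t) ∧ (∀ t, H (t, 1) = γ' t) ∧
    (∀ s, H (0, s) = 0) ∧ (∀ s, H (1, s) = 0) ∧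
    ∀ s, IsDirectedLoop fun t => H (t, s)

private lemma aux_norm_half : ‖((1/2 : ℝ) : AddCircle (1:ℝ))‖ = 1/2 := by
  rw [AddCircle.norm_eq, round_eq]
  norm_num

private lemma aux_norm_neg_half : ‖((-(1/2) : ℝ) : AddCircle (1:ℝ))‖ = 1/2 := by
  rw [AddCircle.norm_eq, round_eq]
  norm_num

private lemma aux_abs_lt_half (f : Set.Icc (0:ℝ) 1 → ℝ) (hf : Continuous f) (h0 : f 0 = 0)
    (h : ∀ t, ‖((f t : ℝ) : AddCircle (1:ℝ))‖ < 1/2) : |f 1| < 1/2 := by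
  by_contra hc
  rw [not_lt, le_abs] at hc
  rcases hc with hc | hc
  · have hm : (1/2 : ℝ) ∈ Set.Icc (f 0) (f 1) := ⟨by rw [h0]; norm_num, hc⟩
    obtain ⟨t, ht⟩ := intermediate_value_univ 0 1 hf hm
    have h2 := h t
    rw [ht, aux_norm_half] at h2
    linarith
  · have hm : (-(1/2) : ℝ) ∈ Set.Icc (f 1) (f 0) := ⟨by linarith, by rw [h0]; norm_num⟩
    obtain ⟨t, ht⟩ := intermediate_value_univ 1 0 hf hm
    have h2 := h t
    rw [ht, aux_norm_neg_half] at h2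
    linarith

private lemma aux_deg_int {γ g} (hg : IsDiLift γ g) : ∃ k : ℤ, g 1 = (k:ℝ) := by
  have h : ((g 1 : ℝ) : AddCircle (1:ℝ)) = 0 := by
    rw [← hg.2.2.2.1 1]; exact hg.2.2.2.2
  rw [AddCircle.coe_eq_zero_iff] at h
  obtain ⟨n, hn⟩ := h
  exact ⟨n, by simpa using hn.symm⟩

private lemma aux_deg_close {γ γ' g g'} (hg : IsDiLift γ g) (hg' : IsDiLift γ' g')
    (h : ∀ t, ‖γ t - γ' t‖ < 1/2) : g 1 = g' 1 := by
  obtain ⟨k, hk⟩ := aux_deg_int hg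
  obtain ⟨k', hk'⟩ := aux_deg_int hg'
  have key : |g 1 - g' 1| < 1/2 := by
    apply aux_abs_lt_half (fun t => g t - g' t) (hg.1.sub hg'.1)
      (by show g 0 - g' 0 = 0; rw [hg.2.2.1, hg'.2.2.1]; ring)
    intro t
    have he : ((g t - g' t : ℝ) : AddCircle (1:ℝ)) = γ t - γ' t := by
      rw [QuotientAddGroup.mk_sub, ← hg.2.2.2.1 t, ← hg'.2.2.2.1 t]
    rw [he]; exact h t
  rw [hk, hk'] at key ⊢
  have h2 : |((k - k' : ℤ) : ℝ)| < 1 := by push_cast; rw [← Int.cast_sub] at key; push_cast at key; linarith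
  rw [← Int.cast_abs] at h2
  have h3 : k - k' = 0 := Int.abs_lt_one_iff.mp (by exact_mod_cast h2)
  have : k = k' := by omega
  rw [this]

private lemma aux_wd {γ γ' g g'} (hγ : γ = γ') (hg : IsDiLift γ g) (hg' : IsDiLift γ' g') :
    g 1 = g' 1 := by
  subst hγ
  exact aux_deg_close hg hg' (fun t => by rw [sub_self, norm_zero]; norm_num)

private lemma aux_dihom {γ γ' g g'} (hg : IsDiLift γ g) (hg' : IsDiLift γ' g')
    (h : g 1 = g' 1) : Dihomotopic γ γ' := by
  obtain ⟨hgc, hgm, hg0, hgl, hge⟩ := hg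
  obtain ⟨hgc', hgm', hg0', hgl', hge'⟩ := hg'
  have hcoe : ((g 1 : ℝ) : AddCircle (1:ℝ)) = 0 := by rw [← hgl 1]; exact hge
  refine ⟨fun q => (((1 - (q.2:ℝ)) * g q.1 + (q.2:ℝ) * g' q.1 : ℝ) : AddCircle (1:ℝ)),
    ?_, ?_, ?_, ?_, ?_, ?_⟩
  · exact (AddCircle.continuous_mk' 1).comp
      (((continuous_const.sub (continuous_subtype_val.comp continuous_snd)).mul
        (hgc.comp continuous_fst)).add
       ((continuous_subtype_val.comp continuous_snd).mul (hgc'.comp continuous_fst)))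
  · intro t
    rw [hgl t]
    norm_num
  · intro t
    rw [hgl' t]
    norm_num
  · intro s
    show (((1 - (s:ℝ)) * g 0 + (s:ℝ) * g' 0 : ℝ) : AddCircle (1:ℝ)) = 0
    rw [hg0, hg0']
    norm_num
  · intro s
    show (((1 - (s:ℝ)) * g 1 + (s:ℝ) * g' 1 : ℝ) : AddCircle (1:ℝ)) = 0
    rw [← h]
    have : (1 - (s:ℝ)) * g 1 + (s:ℝ) * g 1 = g 1 := by ring
    rw [this, hcoe]
  · intro s
    refine ⟨fun t => (1 - (s:ℝ)) * g t + (s:ℝ) * g' t, ?_, ?_, ?_, fun t => rfl, ?_⟩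
    · exact ((continuous_const.mul hgc).add (continuous_const.mul hgc'))
    · exact ((hgm.const_mul (by linarith [s.2.2] : (0:ℝ) ≤ 1 - (s:ℝ))).add
        (hgm'.const_mul s.2.1))
    · show (1 - (s:ℝ)) * g 0 + (s:ℝ) * g' 0 = 0
      rw [hg0, hg0']; ring
    · show (((1 - (s:ℝ)) * g 1 + (s:ℝ) * g' 1 : ℝ) : AddCircle (1:ℝ)) = 0
      rw [← h]
      have : (1 - (s:ℝ)) * g 1 + (s:ℝ) * g 1 = g 1 := by ring
      rw [this, hcoe]

private lemma aux_deg_of_dihom {γ γ' g g'} (hd : Dihomotopic γ γ')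
    (hg : IsDiLift γ g) (hg' : IsDiLift γ' g') : g 1 = g' 1 := by
  obtain ⟨H, hHc, hH0, hH1, -, -, hHs⟩ := hd
  choose L hL using hHs
  have huc : UniformContinuous H := CompactSpace.uniformContinuous_of_continuous hHc
  obtain ⟨δ, hδ, hδ2⟩ := Metric.uniformContinuous_iff.mp huc (1/2) (by norm_num)
  have step : ∀ s s' : Set.Icc (0:ℝ) 1, dist s s' < δ → L s 1 = L s' 1 := by
    intro s s' hss
    apply aux_deg_close (hL s) (hL s')
    intro t
    have hdd : dist ((t, s) : Set.Icc (0:ℝ) 1 × Set.Icc (0:ℝ) 1) (t, s') < δ := by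
      rw [Prod.dist_eq]
      simpa [dist_self, max_eq_right dist_nonneg] using hss
    have h2 := hδ2 hdd
    rwa [dist_eq_norm] at h2
  have hT : IsClopen {s : Set.Icc (0:ℝ) 1 | L s 1 = L 0 1} := by
    constructor
    · rw [← isOpen_compl_iff, Metric.isOpen_iff]
      intro s hs
      refine ⟨δ, hδ, fun s' hs' he => hs ?_⟩
      rw [Metric.mem_ball] at hs'
      exact (step s s' (by rwa [dist_comm])).trans he
    · rw [Metric.isOpen_iff]
      intro s hs
      refine ⟨δ, hδ, fun s' hs' => ?_⟩
      rw [Metric.mem_ball] at hs'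
      exact (step s' s hs').trans hs
  have huniv := hT.eq_univ ⟨0, rfl⟩
  have h11 : L 1 1 = L 0 1 := Set.eq_univ_iff_forall.mp huniv 1
  have hγ0 : g 1 = L 0 1 := aux_wd (funext hH0).symm hg (hL 0)
  have hγ1 : g' 1 = L 1 1 := aux_wd (funext hH1).symm hg' (hL 1)
  rw [hγ0, hγ1, h11]

private lemma aux_dl_of_dihom {γ γ'} (hd : Dihomotopic γ γ') :
    IsDirectedLoop γ ∧ IsDirectedLoop γ' := by
  obtain ⟨H, -, h0, h1, -, -, hs⟩ := hd
  exact ⟨funext h0 ▸ hs 0, funext h1 ▸ hs 1⟩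

/-- The fundamental monoid of the directed circle: the degree is well defined,
dihomotopy is an equivalence relation on directed loops, degrees are
nonnegative integers, two directed loops are dihomotopic iff they have equal
degrees, and every natural number is realized as a degree.  Hence the degree
induces a bijection from dihomotopy classes of directed loops onto `ℕ`. -/
theorem directed_circle_fundamental_monoid :
    -- degree is well defined
    (∀ γ g g', IsDiLift γ g → IsDiLift γ g' → g 1 = g' 1) ∧
    -- dihomotopy is reflexive on directed loops, symmetric, and transitive
    (∀ γ, IsDirectedLoop γ → Dihomotopic γ γ) ∧
    (∀ γ γ', Dihomotopic γ γ' → Dihomotopic γ' γ) ∧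
    (∀ γ₁ γ₂ γ₃, Dihomotopic γ₁ γ₂ → Dihomotopic γ₂ γ₃ → Dihomotopic γ₁ γ₃) ∧
    -- the degree of a directed loop is a nonnegative integer
    (∀ γ g, IsDiLift γ g → ∃ m : ℕ, g 1 = (m : ℝ)) ∧
    -- dihomotopic iff equal degree
    (∀ γ γ' g g', IsDiLift γ g → IsDiLift γ' g' →
      (Dihomotopic γ γ' ↔ g 1 = g' 1)) ∧
    -- every natural number is a degree
    (∀ m : ℕ, ∃ γ g, IsDiLift γ g ∧ g 1 = (m : ℝ)) := by
  refine ⟨fun γ g g' hg hg' => aux_wd rfl hg hg', ?_, ?_, ?_, ?_, ?_, ?_⟩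
  · rintro γ ⟨g, hg⟩
    exact aux_dihom hg hg rfl
  · intro γ γ' hd
    obtain ⟨⟨g, hg⟩, ⟨g', hg'⟩⟩ := aux_dl_of_dihom hd
    exact aux_dihom hg' hg (aux_deg_of_dihom hd hg hg').symm
  · intro γ₁ γ₂ γ₃ h12 h23
    obtain ⟨⟨g₁, hg₁⟩, ⟨g₂, hg₂⟩⟩ := aux_dl_of_dihom h12
    obtain ⟨-, ⟨g₃, hg₃⟩⟩ := aux_dl_of_dihom h23
    exact aux_dihom hg₁ hg₃
      ((aux_deg_of_dihom h12 hg₁ hg₂).trans (aux_deg_of_dihom h23 hg₂ hg₃))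
  · intro γ g hg
    obtain ⟨k, hk⟩ := aux_deg_int hg
    have h01 : (0 : Set.Icc (0:ℝ) 1) ≤ 1 := by
      rw [← Subtype.coe_le_coe, Set.Icc.coe_zero, Set.Icc.coe_one]; norm_num
    have hnn : (0:ℝ) ≤ g 1 := by
      have h2 := hg.2.1 h01
      rwa [hg.2.2.1] at h2
    have hknn' : (0:ℝ) ≤ (k:ℝ) := by rw [← hk]; exact hnn
    have hknn : 0 ≤ k := by exact_mod_cast hknn'
    exact ⟨k.toNat, by rw [hk]; exact_mod_cast (Int.toNat_of_nonneg hknn).symm⟩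
  · intro γ γ' g g' hg hg'
    exact ⟨fun hd => aux_deg_of_dihom hd hg hg', fun h => aux_dihom hg hg' h⟩
  · intro m
    refine ⟨fun t => (((m : ℝ) * t : ℝ) : AddCircle (1:ℝ)), fun t => (m : ℝ) * t,
      ⟨continuous_const.mul continuous_subtype_val, ?_, by norm_num, fun t => rfl, ?_⟩, by norm_num⟩
    · exact fun a b hab =>
        mul_le_mul_of_nonneg_left (Subtype.coe_le_coe.mpr hab) (by positivity)
    · show (((m:ℝ) * ((1 : Set.Icc (0:ℝ) 1) : ℝ) : ℝ) : AddCircle (1:ℝ)) = 0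
      rw [Set.Icc.coe_one, mul_one, AddCircle.coe_eq_zero_iff]
      exact ⟨m, by simp⟩
end

section
/- Let γ̃ : [0,1] → ℝ be a continuous nondecreasing function with γ̃ 1 − γ̃ 0 ∈ ℤ, and let p : ℝ → AddCircle ℝ 1 be the projection, so that γ = p ∘ γ̃ is a loop in AddCircle ℝ 1 (γ 0 = γ 1). If γ is homotopic relative to {0,1} to the constant loop at γ 0, then γ̃ is constant; in particular γ is constant. -/
open Set

/-- The canonical "small" representative of a point of `ℝ/ℤ`, in `[-1/2, 1/2)`. -/
noncomputable def circDelta : AddCircle (1:ℝ) → ℝ :=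
  fun q => ((AddCircle.equivIco 1 (-(1/2)) q : ℝ))

lemma circDelta_coe_eq (q : AddCircle (1:ℝ)) :
    ((circDelta q : ℝ) : AddCircle (1:ℝ)) = q :=
  (AddCircle.equivIco 1 (-(1/2))).symm_apply_apply q

lemma circDelta_zero : circDelta (0 : AddCircle (1:ℝ)) = 0 := by
  have h0 : ((0:ℝ) : AddCircle (1:ℝ)) = 0 := by norm_num
  have : circDelta ((0:ℝ) : AddCircle (1:ℝ)) =
      toIcoMod (by norm_num : (0:ℝ) < 1) (-(1/2)) 0 := rfl
  rw [← h0, this, toIcoMod_eq_self]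
  constructor <;> norm_num

lemma circDelta_continuousAt {q : AddCircle (1:ℝ)} (hq : ‖q‖ < 1/2) :
    ContinuousAt circDelta q := by
  have hne : q ≠ ((-(1/2) : ℝ) : AddCircle (1:ℝ)) := by
    intro h
    have hn : ‖((-(1/2) : ℝ) : AddCircle (1:ℝ))‖ = 1/2 := by
      rw [AddCircle.norm_eq]
      norm_num [round_eq]
    rw [h, hn] at hq
    linarith
  exact continuousAt_subtype_val.comp (AddCircle.continuousAt_equivIco 1 (-(1/2)) hne)

/-- Two continuous lifts of the same map to `ℝ/ℤ` from a preconnected space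
differ by a constant. -/
lemma lift_sub_const {X : Type*} [TopologicalSpace X] [PreconnectedSpace X]
    {L L' : X → ℝ} (hL : Continuous L) (hL' : Continuous L')
    (h : ∀ t, ((L t : ℝ) : AddCircle (1:ℝ)) = ((L' t : ℝ) : AddCircle (1:ℝ)))
    (a b : X) : L a - L' a = L b - L' b := by
  set f : X → ℝ := fun t => L t - L' t with hf
  have hfc : Continuous f := hL.sub hL'
  have key : ∀ t, ∃ k : ℤ, f t = (k : ℝ) := by
    intro t
    have := (QuotientAddGroup.eq_iff_sub_mem).mp (h t)
    rw [AddSubgroup.mem_zmultiples_iff] at this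
    obtain ⟨k, hk⟩ := this
    exact ⟨k, by simpa [hf] using hk.symm⟩
  obtain ⟨ka, hka⟩ := key a
  obtain ⟨kb, hkb⟩ := key b
  have noHalf : ∀ (u v : X), f u < f v → False := by
    intro u v huv
    obtain ⟨ku, hku⟩ := key u
    obtain ⟨kv, hkv⟩ := key v
    have hkuv : ku < kv := by exact_mod_cast (hku ▸ hkv ▸ huv)
    have hmem : (ku : ℝ) + 1/2 ∈ Set.Icc (f u) (f v) := by
      constructor
      · rw [hku]; linarith
      · rw [hkv]
        have : (ku : ℝ) + 1 ≤ kv := by exact_mod_cast Int.add_one_le_iff.mpr hkuv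
        linarith
    obtain ⟨c, hc⟩ := intermediate_value_univ u v hfc hmem
    obtain ⟨kc, hkc⟩ := key c
    rw [hkc] at hc
    have : (2 * (kc - ku) : ℤ) = (1 : ℤ) := by
      have : ((2 * (kc - ku) : ℤ) : ℝ) = 1 := by push_cast; linarith
      exact_mod_cast this
    omega
  rcases lt_trichotomy (f a) (f b) with hlt | heq | hgt
  · exact absurd hlt (fun hl => noHalf a b hl)
  · exact heq
  · exact absurd hgt (fun hg => noHalf b a hg)

/-- A directed loop on the circle `ℝ/ℤ` (a loop admitting a continuous
nondecreasing lift to `ℝ`) that is null-homotopic relative to endpoints is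
constant; indeed its lift is constant. -/
theorem directed_loop_nullhomotopic_constant
    (g : Set.Icc (0:ℝ) 1 → ℝ)
    (hgc : Continuous g) (hgm : Monotone g)
    (hint : ∃ k : ℤ, g 1 - g 0 = (k : ℝ))
    (hnull : ∃ H : Set.Icc (0:ℝ) 1 × Set.Icc (0:ℝ) 1 → AddCircle (1:ℝ),
      Continuous H ∧
      (∀ t, H (t, 0) = ((g t : ℝ) : AddCircle (1:ℝ))) ∧
      (∀ t, H (t, 1) = ((g 0 : ℝ) : AddCircle (1:ℝ))) ∧
      (∀ s, H (0, s) = ((g 0 : ℝ) : AddCircle (1:ℝ))) ∧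
      (∀ s, H (1, s) = ((g 1 : ℝ) : AddCircle (1:ℝ)))) :
    ∀ t, g t = g 0 := by
  classical
  obtain ⟨H, Hc, H0, H1, Hl, Hr⟩ := hnull
  have : PreconnectedSpace (Set.Icc (0:ℝ) 1) :=
    Subtype.preconnectedSpace isPreconnected_Icc
  -- uniform continuity of H
  have Hu : UniformContinuous H := CompactSpace.uniformContinuous_of_continuous Hc
  obtain ⟨ε, hε, hε2⟩ := Metric.uniformContinuous_iff.mp Hu (1/2) (by norm_num)
  -- the winding property
  set W : Set.Icc (0:ℝ) 1 → Prop := fun s => ∃ L : Set.Icc (0:ℝ) 1 → ℝ,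
      Continuous L ∧ (∀ t, ((L t : ℝ) : AddCircle (1:ℝ)) = H (t, s)) ∧
      L 1 - L 0 = g 1 - g 0 with hW
  have transfer : ∀ s s' : Set.Icc (0:ℝ) 1, dist s s' < ε → W s → W s' := by
    rintro s s' hss ⟨L, hLc, hLl, hLw⟩
    have hclose : ∀ t : Set.Icc (0:ℝ) 1, ‖H (t, s') - H (t, s)‖ < 1/2 := by
      intro t
      have hd : dist ((t, s') : _ × _) (t, s) < ε := by
        rw [Prod.dist_eq, dist_self]
        exact max_lt hε (by simpa [dist_comm] using hss)
      have := hε2 hd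
      rwa [dist_eq_norm] at this
    have hcont2 : Continuous fun t : Set.Icc (0:ℝ) 1 => H (t, s') - H (t, s) :=
      (Hc.comp (continuous_id.prodMk continuous_const)).sub
        (Hc.comp (continuous_id.prodMk continuous_const))
    refine ⟨fun t => L t + circDelta (H (t, s') - H (t, s)), ?_, ?_, ?_⟩
    · refine hLc.add (continuous_iff_continuousAt.mpr fun t => ?_)
      show ContinuousAt (circDelta ∘ fun t => H (t, s') - H (t, s)) t
      exact ContinuousAt.comp (g := circDelta) (f := fun t => H (t, s') - H (t, s))
        (x := t) (circDelta_continuousAt (hclose t)) hcont2.continuousAt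
    · intro t
      push_cast [QuotientAddGroup.mk_add]
      rw [circDelta_coe_eq, hLl t]
      abel
    · have h1 : H ((1 : Set.Icc (0:ℝ) 1), s') - H (1, s) = 0 := by
        rw [Hr s', Hr s, sub_self]
      have h0 : H ((0 : Set.Icc (0:ℝ) 1), s') - H (0, s) = 0 := by
        rw [Hl s', Hl s, sub_self]
      simp only [h1, h0, circDelta_zero, add_zero]
      exact hLw
  have hclopen : IsClopen {s | W s} := by
    constructor
    · rw [← isOpen_compl_iff]
      rw [Metric.isOpen_iff]
      intro s hs
      refine ⟨ε, hε, fun s' hs' => ?_⟩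
      intro hWs'
      exact hs (transfer s' s (by simpa [dist_comm] using Metric.mem_ball.mp hs') hWs')
    · rw [Metric.isOpen_iff]
      intro s hs
      refine ⟨ε, hε, fun s' hs' => ?_⟩
      exact transfer s s' (by simpa [dist_comm] using Metric.mem_ball.mp hs') hs
  have hne : (0 : Set.Icc (0:ℝ) 1) ∈ {s | W s} := by
    exact ⟨g, hgc, fun t => (H0 t).symm, rfl⟩
  have hall : {s | W s} = Set.univ := by
    rcases isClopen_iff.mp hclopen with h | h
    · rw [h] at hne; exact absurd hne (Set.notMem_empty _)
    · exact h
  have hW1 : W 1 := by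
    have : (1 : Set.Icc (0:ℝ) 1) ∈ {s | W s} := hall ▸ Set.mem_univ _
    exact this
  obtain ⟨L, hLc, hLl, hLw⟩ := hW1
  have hLl' : ∀ t, ((L t : ℝ) : AddCircle (1:ℝ)) = (((fun _ => g 0) t : ℝ) : AddCircle (1:ℝ)) := by
    intro t; rw [hLl t, H1 t]
  have hconst := lift_sub_const hLc continuous_const hLl' 1 0
  have hg10 : g 1 = g 0 := by
    have : L 1 - L 0 = 0 := by linarith [hconst]
    linarith [hLw, this]
  intro t
  have ht0 : (0 : Set.Icc (0:ℝ) 1) ≤ t := by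
    rw [← Subtype.coe_le_coe]
    exact t.2.1
  have ht1 : t ≤ (1 : Set.Icc (0:ℝ) 1) := by
    rw [← Subtype.coe_le_coe]
    exact t.2.2
  exact le_antisymm (hg10 ▸ hgm ht1) (hgm ht0)
end

section
/- For z, z' ∈ ℂ and a subset V ⊆ ℂ, write z ⇝_V z' if there exist continuous nondecreasing functions α, β : [0,1] → ℝ such that the path t ↦ α t · exp(β t · i) takes values in V, starts at z, and ends at z'. Then for every open neighborhood V of 0 in ℂ there exist z, z' ∈ V with z ≠ z', z ⇝_V z', and z' ⇝_V z. -/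
/-- `z ⇝_V z'`: there exist continuous nondecreasing `α, β : [0,1] → ℝ` such
that `t ↦ α t · e^{i β t}` is a path from `z` to `z'` contained in `V`. -/
def DiReach (V : Set ℂ) (z z' : ℂ) : Prop :=
  ∃ α β : Set.Icc (0:ℝ) 1 → ℝ,
    Continuous α ∧ Continuous β ∧ Monotone α ∧ Monotone β ∧
    (∀ t, ((α t : ℂ) * Complex.exp ((β t : ℂ) * Complex.I)) ∈ V) ∧
    (α 0 : ℂ) * Complex.exp ((β 0 : ℂ) * Complex.I) = z ∧
    (α 1 : ℂ) * Complex.exp ((β 1 : ℂ) * Complex.I) = z'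

lemma diReach_arc (V : Set ℂ) (r : ℝ) (hr : 0 < r)
    (hV : ∀ θ : ℝ, (r : ℂ) * Complex.exp ((θ : ℂ) * Complex.I) ∈ V)
    (θ₀ θ₁ : ℝ) (h : θ₀ ≤ θ₁) :
    DiReach V ((r : ℂ) * Complex.exp ((θ₀ : ℂ) * Complex.I))
      ((r : ℂ) * Complex.exp ((θ₁ : ℂ) * Complex.I)) := by
  refine ⟨fun _ => r, fun t => θ₀ + (θ₁ - θ₀) * t, continuous_const, ?_, monotone_const, ?_,
    fun t => hV _, ?_, ?_⟩
  · exact continuous_const.add (continuous_const.mul continuous_subtype_val)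
  · intro a b hab
    have : (a : ℝ) ≤ b := hab
    have h2 : 0 ≤ θ₁ - θ₀ := by linarith
    dsimp
    nlinarith
  · norm_num
  · norm_num

/-- The origin is a vortex of the directed complex plane: on every open
neighborhood of `0`, the reachability preorder fails to be antisymmetric. -/
theorem zero_is_vortex_of_directed_complex_plane :
    ∀ V : Set ℂ, IsOpen V → (0 : ℂ) ∈ V →
      ∃ z z' : ℂ, z ∈ V ∧ z' ∈ V ∧ z ≠ z' ∧
        DiReach V z z' ∧ DiReach V z' z := by
  intro V hV h0
  obtain ⟨ε, hε, hball⟩ := Metric.isOpen_iff.mp hV 0 h0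
  set r := ε / 2 with hrdef
  have hr : 0 < r := by positivity
  have hmem : ∀ θ : ℝ, (r : ℂ) * Complex.exp ((θ : ℂ) * Complex.I) ∈ V := by
    intro θ
    apply hball
    simp only [Metric.mem_ball, dist_zero_right, norm_mul, Complex.norm_real,
      Complex.norm_exp_ofReal_mul_I]
    rw [Real.norm_eq_abs, abs_of_pos hr]
    simpa [hrdef] using by linarith
  have key : ∀ θ₀ θ₁ : ℝ, θ₀ ≤ θ₁ →
      DiReach V ((r : ℂ) * Complex.exp ((θ₀ : ℂ) * Complex.I))
        ((r : ℂ) * Complex.exp ((θ₁ : ℂ) * Complex.I)) :=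
    fun θ₀ θ₁ h => diReach_arc V r hr hmem θ₀ θ₁ h
  refine ⟨r, -r, ?_, ?_, ?_, ?_, ?_⟩
  · simpa using hmem 0
  · have := hmem Real.pi
    simpa [Complex.exp_pi_mul_I] using this
  · intro h
    have h2 : (r : ℂ) = 0 := by linear_combination h / 2
    exact absurd (by exact_mod_cast h2) hr.ne'
  · have := key 0 Real.pi Real.pi_pos.le
    simpa [Complex.exp_pi_mul_I] using this
  · have := key Real.pi (2 * Real.pi) (by linarith [Real.pi_pos])
    simpa [Complex.exp_pi_mul_I, Complex.exp_two_pi_mul_I] using this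
end

section
/- For points z, z' of the unit circle 𝕊 = {w ∈ ℂ : |w| = 1} and a subset V ⊆ 𝕊, write z ≤_V z' if there exist real numbers θ ≤ θ' with z = exp(θ·i), z' = exp(θ'·i), and {exp(t·i) : t ∈ [θ,θ']} ⊆ V. Then for every point z₀ ∈ 𝕊 there exists a subset V ⊆ 𝕊, open in the subspace topology of 𝕊 and containing z₀, such that the relation ≤_V is antisymmetric (i.e., z ≤_V z' and z' ≤_V z imply z = z'). -/
lemma exp_I_eq_iff {a b : ℝ} :
    Complex.exp ((a:ℂ)*Complex.I) = Complex.exp ((b:ℂ)*Complex.I) ↔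
      ∃ m : ℤ, a = b + m * (2*Real.pi) := by
  rw [Complex.exp_eq_exp_iff_exists_int]
  constructor
  · rintro ⟨m, hm⟩
    refine ⟨m, ?_⟩
    have h := congrArg Complex.im hm
    simpa using h
  · rintro ⟨m, hm⟩
    exact ⟨m, by rw [hm]; push_cast; ring⟩

/-- `z ≤_V z'`: there is a counterclockwise arc from `z` to `z'` contained in
`V ⊆ 𝕊`. -/
def ArcLe (V : Set ℂ) (z z' : ℂ) : Prop :=
  ∃ θ θ' : ℝ, θ ≤ θ' ∧
    z = Complex.exp ((θ : ℂ) * Complex.I) ∧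
    z' = Complex.exp ((θ' : ℂ) * Complex.I) ∧
    ∀ t ∈ Set.Icc θ θ', Complex.exp ((t : ℂ) * Complex.I) ∈ V

/-- The directed circle is vortex-free: every point of the unit circle has a
neighborhood, open in the subspace topology of the circle, on which the arc
preorder is antisymmetric. -/
theorem directed_circle_vortex_free :
    ∀ z₀ : ℂ, ‖z₀‖ = 1 →
      ∃ V : Set ℂ, V ⊆ {w : ℂ | ‖w‖ = 1} ∧
        (∃ U : Set ℂ, IsOpen U ∧ V = U ∩ {w : ℂ | ‖w‖ = 1}) ∧
        z₀ ∈ V ∧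
        ∀ z z' : ℂ, ArcLe V z z' → ArcLe V z' z → z = z' := by
  intro z₀ hz₀
  set S : Set ℂ := {w : ℂ | ‖w‖ = 1} with hS
  refine ⟨({-z₀}ᶜ : Set ℂ) ∩ S, Set.inter_subset_right, ⟨{-z₀}ᶜ, isOpen_compl_singleton, rfl⟩, ?_, ?_⟩
  · refine ⟨?_, hz₀⟩
    simp only [Set.mem_compl_iff, Set.mem_singleton_iff]
    intro h
    have hz0 : z₀ ≠ 0 := by
      intro h0; rw [h0] at hz₀; simp at hz₀
    have h2 : z₀ + z₀ = 0 := by nth_rewrite 2 [h]; ring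
    have : (2:ℂ) * z₀ = 0 := by linear_combination h2
    simp [hz0] at this
  · -- antisymmetry
    -- express -z₀ as exp(φ I)
    have hφ : z₀ = Complex.exp ((Complex.arg z₀ : ℂ) * Complex.I) := by
      conv_lhs => rw [← Complex.norm_mul_exp_arg_mul_I z₀]
      rw [hz₀]; simp
    set φ : ℝ := Complex.arg z₀ + Real.pi with hφdef
    have hnegz₀ : -z₀ = Complex.exp ((φ:ℂ) * Complex.I) := by
      rw [hφdef]
      push_cast
      rw [add_mul, Complex.exp_add, Complex.exp_pi_mul_I]
      rw [← hφ]; ring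
    rintro z z' ⟨θ₁, θ₂, h12, hz1, hz2, harc1⟩ ⟨θ₃, θ₄, h34, hz3, hz4, harc2⟩
    -- exp θ₃ = exp θ₂, exp θ₄ = exp θ₁
    obtain ⟨m, hm⟩ : ∃ m : ℤ, θ₃ = θ₂ + m * (2*Real.pi) := by
      rw [← exp_I_eq_iff, ← hz2, ← hz3]
    obtain ⟨n, hn⟩ : ∃ n : ℤ, θ₄ = θ₁ + n * (2*Real.pi) := by
      rw [← exp_I_eq_iff, ← hz1, ← hz4]
    have hpi : (0:ℝ) < 2*Real.pi := by positivity
    set k : ℤ := n - m with hk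
    have hL2 : θ₂ ≤ θ₁ + k * (2*Real.pi) := by
      have : θ₃ ≤ θ₄ := h34
      rw [hm, hn] at this
      push_cast [hk]
      linarith
    rcases le_or_gt k 0 with hk0 | hk0
    · -- k ≤ 0 : lengths force θ₁ = θ₂
      have hk' : (k:ℝ) * (2*Real.pi) ≤ 0 := by
        apply mul_nonpos_of_nonpos_of_nonneg
        · exact_mod_cast hk0
        · linarith
      have : θ₁ = θ₂ := le_antisymm h12 (by linarith)
      rw [hz1, hz2, this]
    · -- k ≥ 1 : the two arcs cover the circle, hitting -z₀
      exfalso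
      have hk1 : (1:ℝ) ≤ (k:ℝ) := by exact_mod_cast hk0
      -- find j with φ + j*(2π) ∈ [θ₁, θ₁+2π)
      obtain ⟨j, hj, -⟩ := existsUnique_add_zsmul_mem_Ico hpi φ θ₁
      set ψ : ℝ := φ + j • (2*Real.pi) with hψ
      have hψ1 : θ₁ ≤ ψ := hj.1
      have hψ2 : ψ < θ₁ + 2*Real.pi := hj.2
      have hexpψ : Complex.exp ((ψ:ℂ) * Complex.I) = -z₀ := by
        rw [hnegz₀, exp_I_eq_iff]
        exact ⟨j, by rw [hψ]; push_cast [zsmul_eq_mul]; ring⟩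
      have hne : ∀ t : ℝ, Complex.exp ((t:ℂ) * Complex.I) ∈ ({-z₀}ᶜ : Set ℂ) ∩ S →
          Complex.exp ((t:ℂ) * Complex.I) ≠ -z₀ := by
        intro t ht; exact ht.1
      rcases le_or_gt ψ θ₂ with hc | hc
      · exact hne ψ (harc1 ψ ⟨hψ1, hc⟩) hexpψ
      · -- ψ ∈ (θ₂, θ₁ + 2π) ; t := ψ + m*(2π) ∈ [θ₃, θ₄]
        set t : ℝ := ψ + m * (2*Real.pi) with htdef
        have ht3 : θ₃ ≤ t := by rw [hm, htdef]; linarith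
        have ht4 : t ≤ θ₄ := by
          rw [hn, htdef]
          have : ψ ≤ θ₁ + k * (2*Real.pi) := by nlinarith
          push_cast [hk] at this ⊢
          linarith
        have hexpt : Complex.exp ((t:ℂ) * Complex.I) = -z₀ := by
          rw [← hexpψ, exp_I_eq_iff]
          exact ⟨m, rfl⟩
        exact hne t (harc2 t ⟨ht3, ht4⟩) hexpt
end
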